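/- Let n ≥ 1 and let H be a Hermitian matrix on n qubits normalized so that Re (trace (H * H)) = 1, and suppose H is type-I locally invertible, i.e. there exists a local unitary K₀ with K₀ * H * K₀ᴴ = -H. Then the local C-numerical range of (-H, H) is the full real line segment from -1 to +1: { x : ℝ | ∃ local unitary K, (x : ℂ) = trace ((-H) * (K * H * Kᴴ)) } = Set.Icc (-1 : ℝ) 1. (The value -1 is attained at K = 1, the value +1 at K = K₀, the set is connected because the local unitary group is connected, and it is contained in [-1, 1] by the Cauchy–Schwarz inequality for the Frobenius inner product.) -/

import Mathlib

open Matrix Complex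

/-- A `2^n`-dimensional matrix (indexed by configurations `Fin n → Fin 2`) is a
local unitary if it is the `n`-fold Kronecker product of unitary 2×2 matrices. -/
def IsLocalUnitary {n : ℕ} (K : Matrix (Fin n → Fin 2) (Fin n → Fin 2) ℂ) : Prop :=
  ∃ u : Fin n → Matrix (Fin 2) (Fin 2) ℂ,
    (∀ ℓ, (u ℓ)ᴴ * u ℓ = 1) ∧ ∀ f g, K f g = ∏ ℓ, u ℓ (f ℓ) (g ℓ)

/-- The Pauli-z operator acting on qubit `ℓ`. -/
def Zop {n : ℕ} (ℓ : Fin n) : Matrix (Fin n → Fin 2) (Fin n → Fin 2) ℂ :=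
  fun f g => if f = g then (-1 : ℂ) ^ ((f ℓ : ℕ)) else 0

/-- The Pauli-x operator acting on qubit `ℓ`. -/
def Xop {n : ℕ} (ℓ : Fin n) : Matrix (Fin n → Fin 2) (Fin n → Fin 2) ℂ :=
  fun f g => if f ℓ ≠ g ℓ ∧ ∀ m, m ≠ ℓ → f m = g m then 1 else 0

/-- The Pauli-y operator acting on qubit `ℓ`. -/
def Yop {n : ℕ} (ℓ : Fin n) : Matrix (Fin n → Fin 2) (Fin n → Fin 2) ℂ :=
  fun f g => if f ℓ ≠ g ℓ ∧ ∀ m, m ≠ ℓ → f m = g m then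
    Complex.I * (-1 : ℂ) ^ ((f ℓ : ℕ) + 1) else 0

/-! ### Auxiliary lemmas -/

lemma conj_exp_I (x : ℝ) : (starRingEnd ℂ) (Complex.exp (x * Complex.I)) = Complex.exp (-(x * Complex.I)) := by
  rw [← Complex.exp_conj]; congr 1; simp

lemma conj_exp_mul_I (x : ℝ) :
    (starRingEnd ℂ) (Complex.exp (x * Complex.I)) * Complex.exp (x * Complex.I) = 1 := by
  rw [conj_exp_I, ← Complex.exp_add, neg_add_cancel, Complex.exp_zero]

lemma kron_mul_apply {n : ℕ} (u v : Fin n → Matrix (Fin 2) (Fin 2) ℂ) (f g : Fin n → Fin 2) :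
    ∑ h : Fin n → Fin 2, (∏ ℓ, u ℓ (f ℓ) (h ℓ)) * ∏ ℓ, v ℓ (h ℓ) (g ℓ)
      = ∏ ℓ, (u ℓ * v ℓ) (f ℓ) (g ℓ) := by
  simp only [Matrix.mul_apply]
  rw [Fintype.prod_sum (fun ℓ j => u ℓ (f ℓ) j * v ℓ j (g ℓ))]
  exact Finset.sum_congr rfl fun h _ => (Finset.prod_mul_distrib).symm

lemma kron_one {n : ℕ} (f g : Fin n → Fin 2) :
    (∏ ℓ, (1 : Matrix (Fin 2) (Fin 2) ℂ) (f ℓ) (g ℓ))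
      = (1 : Matrix (Fin n → Fin 2) (Fin n → Fin 2) ℂ) f g := by
  by_cases h : f = g
  · subst h; simp [Matrix.one_apply]
  · obtain ⟨ℓ, hℓ⟩ := Function.ne_iff.mp h
    rw [Matrix.one_apply_ne h]
    exact Finset.prod_eq_zero (Finset.mem_univ ℓ) (Matrix.one_apply_ne hℓ)

lemma localUnitary_conjTranspose_mul {n : ℕ} {K : Matrix (Fin n → Fin 2) (Fin n → Fin 2) ℂ}
    (hK : IsLocalUnitary K) : Kᴴ * K = 1 := by
  obtain ⟨u, hu1, hu2⟩ := hK
  ext f g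
  rw [Matrix.mul_apply]
  have hKH : ∀ h, Kᴴ f h = ∏ ℓ, (u ℓ)ᴴ (f ℓ) (h ℓ) := by
    intro h
    rw [Matrix.conjTranspose_apply, hu2]
    rw [show star (∏ ℓ, u ℓ (h ℓ) (f ℓ)) = (starRingEnd ℂ) (∏ ℓ, u ℓ (h ℓ) (f ℓ)) from rfl]
    rw [map_prod (starRingEnd ℂ)]
    exact Finset.prod_congr rfl fun ℓ _ => rfl
  calc ∑ h, Kᴴ f h * K h g = ∑ h : Fin n → Fin 2,
        (∏ ℓ, (u ℓ)ᴴ (f ℓ) (h ℓ)) * ∏ ℓ, u ℓ (h ℓ) (g ℓ) := by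
        exact Finset.sum_congr rfl fun h _ => by rw [hKH, hu2]
    _ = ∏ ℓ, ((u ℓ)ᴴ * u ℓ) (f ℓ) (g ℓ) := kron_mul_apply _ _ _ _
    _ = ∏ ℓ, (1 : Matrix (Fin 2) (Fin 2) ℂ) (f ℓ) (g ℓ) := by
        exact Finset.prod_congr rfl fun ℓ _ => by rw [hu1]
    _ = _ := kron_one f g

lemma trace_herm_im {ι : Type*} [Fintype ι] [DecidableEq ι] {A B : Matrix ι ι ℂ}
    (hA : Aᴴ = A) (hB : Bᴴ = B) : ((A * B).trace).im = 0 := by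
  apply Complex.conj_eq_iff_im.mp
  calc (starRingEnd ℂ) ((A * B).trace) = ((A * B)ᴴ).trace := (Matrix.trace_conjTranspose _).symm
    _ = (B * A).trace := by rw [Matrix.conjTranspose_mul, hA, hB]
    _ = (A * B).trace := Matrix.trace_mul_comm _ _

lemma trace_frob_re {ι : Type*} [Fintype ι] (A : Matrix ι ι ℂ) :
    ((Aᴴ * A).trace).re = ∑ p : ι × ι, ‖A p.1 p.2‖ ^ 2 := by
  rw [Matrix.trace]
  simp only [Matrix.diag_apply, Matrix.mul_apply, Matrix.conjTranspose_apply]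
  rw [Fintype.sum_prod_type]
  rw [Complex.re_sum]
  rw [Finset.sum_comm]
  refine Finset.sum_congr rfl fun i _ => ?_
  rw [Complex.re_sum]
  refine Finset.sum_congr rfl fun j _ => ?_
  rw [show star (A j i) = (starRingEnd ℂ) (A j i) from rfl, mul_comm, Complex.mul_conj]
  simp [Complex.sq_norm]

lemma cs_bound {ι : Type*} [Fintype ι] (A B : Matrix ι ι ℂ) :
    ‖(Aᴴ * B).trace‖ ≤
      Real.sqrt ((Aᴴ * A).trace.re) * Real.sqrt ((Bᴴ * B).trace.re) := by
  let X : EuclideanSpace ℂ (ι × ι) := WithLp.toLp 2 (fun p : ι × ι => A p.1 p.2)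
  let Y : EuclideanSpace ℂ (ι × ι) := WithLp.toLp 2 (fun p : ι × ι => B p.1 p.2)
  have hinner : (inner ℂ X Y : ℂ) = (Aᴴ * B).trace := by
    rw [PiLp.inner_apply, Matrix.trace]
    simp only [Matrix.diag_apply, Matrix.mul_apply, Matrix.conjTranspose_apply]
    rw [Fintype.sum_prod_type, Finset.sum_comm]
    exact Finset.sum_congr rfl fun i _ => Finset.sum_congr rfl fun j _ => by simp [X, Y, mul_comm]
  have hX : ‖X‖ = Real.sqrt ((Aᴴ * A).trace.re) := by
    rw [EuclideanSpace.norm_eq, trace_frob_re]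
  have hY : ‖Y‖ = Real.sqrt ((Bᴴ * B).trace.re) := by
    rw [EuclideanSpace.norm_eq, trace_frob_re]
  calc ‖(Aᴴ * B).trace‖ = ‖(inner ℂ X Y : ℂ)‖ := by rw [hinner]
    _ ≤ ‖X‖ * ‖Y‖ := norm_inner_le_norm X Y
    _ = _ := by rw [hX, hY]

/-! ### A path of unitaries from the identity to a given 2×2 unitary -/

noncomputable def udel (u : Matrix (Fin 2) (Fin 2) ℂ) : ℝ :=
  if u 0 0 = 0 then (-(u 0 1)).arg
  else (Complex.exp (-(((u 1 0).arg : ℂ) * Complex.I)) * u 1 1).arg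

noncomputable def upath (u : Matrix (Fin 2) (Fin 2) ℂ) (t : ℝ) : Matrix (Fin 2) (Fin 2) ℂ :=
  !![Complex.exp ((t * (u 0 0).arg : ℝ) * Complex.I) *
       (Real.cos (t * Real.arccos (‖u 0 0‖)) : ℝ),
     -(Complex.exp ((t * (u 0 0).arg : ℝ) * Complex.I) *
       Complex.exp ((t * udel u : ℝ) * Complex.I) *
       (Real.sin (t * Real.arccos (‖u 0 0‖)) : ℝ));
     Complex.exp ((t * (u 1 0).arg : ℝ) * Complex.I) *
       (Real.sin (t * Real.arccos (‖u 0 0‖)) : ℝ),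
     Complex.exp ((t * (u 1 0).arg : ℝ) * Complex.I) *
       Complex.exp ((t * udel u : ℝ) * Complex.I) *
       (Real.cos (t * Real.arccos (‖u 0 0‖)) : ℝ)]

lemma upath_zero (u : Matrix (Fin 2) (Fin 2) ℂ) : upath u 0 = 1 := by
  ext i j
  fin_cases i <;> fin_cases j <;> simp [upath, Matrix.one_apply]

lemma upath_continuous (u : Matrix (Fin 2) (Fin 2) ℂ) (i j : Fin 2) :
    Continuous fun t => upath u t i j := by
  have h1 : ∀ c : ℝ, Continuous fun t : ℝ => Complex.exp ((t * c : ℝ) * Complex.I) := by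
    intro c
    exact Complex.continuous_exp.comp
      ((Complex.continuous_ofReal.comp (continuous_id.mul continuous_const)).mul continuous_const)
  have h2 : ∀ c : ℝ, Continuous fun t : ℝ => ((Real.cos (t * c) : ℝ) : ℂ) :=
    fun c => Complex.continuous_ofReal.comp
      (Real.continuous_cos.comp (continuous_id.mul continuous_const))
  have h3 : ∀ c : ℝ, Continuous fun t : ℝ => ((Real.sin (t * c) : ℝ) : ℂ) :=
    fun c => Complex.continuous_ofReal.comp
      (Real.continuous_sin.comp (continuous_id.mul continuous_const))
  fin_cases i <;> fin_cases j <;> simp only [upath, Matrix.cons_val', Matrix.cons_val_zero,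
    Matrix.cons_val_one, Matrix.head_cons, Matrix.empty_val', Matrix.cons_val_fin_one,
    Matrix.head_fin_const, Matrix.of_apply, Fin.isValue]
  · exact (h1 _).mul (h2 _)
  · exact (((h1 _).mul (h1 _)).mul (h3 _)).neg
  · exact (h1 _).mul (h3 _)
  · exact ((h1 _).mul (h1 _)).mul (h2 _)

lemma upath_unitary (u : Matrix (Fin 2) (Fin 2) ℂ) (t : ℝ) :
    (upath u t)ᴴ * upath u t = 1 := by
  have h1 := conj_exp_mul_I (t * (u 0 0).arg)
  have h2 := conj_exp_mul_I (t * (u 1 0).arg)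
  have h3 := conj_exp_mul_I (t * udel u)
  push_cast at h1 h2 h3
  have hC : (starRingEnd ℂ) (Complex.cos ((t : ℂ) * ((Real.arccos (‖u 0 0‖) : ℝ) : ℂ)))
      = Complex.cos ((t : ℂ) * ((Real.arccos (‖u 0 0‖) : ℝ) : ℂ)) := by
    rw [← Complex.cos_conj, _root_.map_mul, Complex.conj_ofReal, Complex.conj_ofReal]
  have hS : (starRingEnd ℂ) (Complex.sin ((t : ℂ) * ((Real.arccos (‖u 0 0‖) : ℝ) : ℂ)))
      = Complex.sin ((t : ℂ) * ((Real.arccos (‖u 0 0‖) : ℝ) : ℂ)) := by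
    rw [← Complex.sin_conj, _root_.map_mul, Complex.conj_ofReal, Complex.conj_ofReal]
  have hp := Complex.cos_sq_add_sin_sq ((t : ℂ) * ((Real.arccos (‖u 0 0‖) : ℝ) : ℂ))
  set A := Complex.exp ((t : ℂ) * (((u 0 0).arg : ℝ) : ℂ) * Complex.I) with hA
  set G := Complex.exp ((t : ℂ) * (((u 1 0).arg : ℝ) : ℂ) * Complex.I) with hG
  set D := Complex.exp ((t : ℂ) * ((udel u : ℝ) : ℂ) * Complex.I) with hD
  set C := Complex.cos ((t : ℂ) * ((Real.arccos (‖u 0 0‖) : ℝ) : ℂ)) with hCd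
  set S := Complex.sin ((t : ℂ) * ((Real.arccos (‖u 0 0‖) : ℝ) : ℂ)) with hSd
  ext i j
  fin_cases i <;> fin_cases j <;>
    simp only [Fin.zero_eta, Fin.mk_one, Fin.isValue] <;>
    simp [upath, Matrix.mul_apply, Fin.sum_univ_two, Matrix.one_apply, ← hA, ← hG, ← hD, ← hCd, ← hSd]
  · rw [hC, hS]; linear_combination C^2 * h1 + S^2 * h2 + hp
  · rw [hC, hS]; linear_combination (-(C*S*D)) * h1 + (C*S*D) * h2
  · rw [hC, hS]; linear_combination (-(C*S*(starRingEnd ℂ) D)) * h1 + (C*S*(starRingEnd ℂ) D) * h2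
  · rw [hC, hS]; linear_combination (S^2*((starRingEnd ℂ) D * D)) * h1 + (C^2*((starRingEnd ℂ) D * D)) * h2
      + (S^2 + C^2) * h3 + hp

lemma upath_one (u : Matrix (Fin 2) (Fin 2) ℂ) (h : uᴴ * u = 1) : upath u 1 = u := by
  have h' : u * uᴴ = 1 := mul_eq_one_comm.mp h
  have h00 : (uᴴ * u) 0 0 = (1 : Matrix (Fin 2) (Fin 2) ℂ) 0 0 := by rw [h]
  have h01 : (uᴴ * u) 0 1 = (1 : Matrix (Fin 2) (Fin 2) ℂ) 0 1 := by rw [h]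
  have r00 : (u * uᴴ) 0 0 = (1 : Matrix (Fin 2) (Fin 2) ℂ) 0 0 := by rw [h']
  have r11 : (u * uᴴ) 1 1 = (1 : Matrix (Fin 2) (Fin 2) ℂ) 1 1 := by rw [h']
  simp only [Matrix.mul_apply, Fin.sum_univ_two, Matrix.conjTranspose_apply,
    Matrix.one_apply_eq, Matrix.one_apply_ne, ne_eq, Fin.zero_eq_one_iff, Nat.succ_ne_self,
    not_false_eq_true, OfNat.ofNat_ne_one, Complex.star_def] at h00 h01 r00 r11
  -- h00 : conj (u 0 0) * u 0 0 + conj (u 1 0) * u 1 0 = 1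
  -- h01 : conj (u 0 0) * u 0 1 + conj (u 1 0) * u 1 1 = 0
  -- r00 : u 0 0 * conj (u 0 0) + u 0 1 * conj (u 0 1) = 1
  -- r11 : u 1 0 * conj (u 1 0) + u 1 1 * conj (u 1 1) = 1
  have nsq : ∀ z : ℂ, (starRingEnd ℂ) z * z = (‖z‖ ^ 2 : ℝ) := by
    intro z; rw [mul_comm, Complex.mul_conj, Complex.sq_norm]
  have N1 : ‖u 0 0‖ ^ 2 + ‖u 1 0‖ ^ 2 = 1 := by
    have := h00; rw [nsq, nsq] at this
    exact_mod_cast this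
  have N2 : ‖u 0 1‖ = ‖u 1 0‖ := by
    have e1 : ‖u 0 0‖ ^ 2 + ‖u 0 1‖ ^ 2 = 1 := by
      have := r00; rw [mul_comm (u 0 0), mul_comm (u 0 1), nsq, nsq] at this
      exact_mod_cast this
    have : ‖u 0 1‖ ^ 2 = ‖u 1 0‖ ^ 2 := by linarith
    exact (pow_left_inj₀ (norm_nonneg _) (norm_nonneg _) two_ne_zero).mp this
  have N3 : ‖u 1 1‖ = ‖u 0 0‖ := by
    have e1 : ‖u 1 0‖ ^ 2 + ‖u 1 1‖ ^ 2 = 1 := by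
      have := r11; rw [mul_comm (u 1 0), mul_comm (u 1 1), nsq, nsq] at this
      exact_mod_cast this
    have : ‖u 1 1‖ ^ 2 = ‖u 0 0‖ ^ 2 := by linarith
    exact (pow_left_inj₀ (norm_nonneg _) (norm_nonneg _) two_ne_zero).mp this
  have habs1 : ‖u 0 0‖ ≤ 1 := by nlinarith [norm_nonneg (u 1 0)]
  set θ := Real.arccos (‖u 0 0‖) with hθ
  have hcos : Real.cos θ = ‖u 0 0‖ :=
    Real.cos_arccos (le_trans (by norm_num) (norm_nonneg _)) habs1
  have hsin : Real.sin θ = ‖u 1 0‖ := by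
    rw [hθ, Real.sin_arccos, show 1 - ‖u 0 0‖ ^ 2 = ‖u 1 0‖ ^ 2 by
      linarith, Real.sqrt_sq (norm_nonneg _)]
  ext i j
  fin_cases i <;> fin_cases j <;>
    simp only [Fin.zero_eta, Fin.mk_one, Fin.isValue] <;>
    simp [upath, ← hθ]
  · -- (0,0) : cexp (↑arg a * I) * cos ↑θ = a
    rw [← Complex.ofReal_cos, hcos, mul_comm]
    exact Complex.norm_mul_exp_arg_mul_I (u 0 0)
  · -- (0,1)
    rw [← Complex.ofReal_sin, hsin]
    by_cases hA : u 0 0 = 0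
    · rw [show udel u = (-(u 0 1)).arg by simp only [udel, if_pos hA]]
      rw [hA, Complex.arg_zero]
      have hc1 : ‖u 1 0‖ = 1 := by
        have h0 : ‖u 0 0‖ = 0 := by simp [hA]
        nlinarith [norm_nonneg (u 1 0)]
      have key := Complex.norm_mul_exp_arg_mul_I (-(u 0 1))
      rw [norm_neg, N2, hc1, Complex.ofReal_one, one_mul] at key
      rw [hc1]
      simp only [Complex.ofReal_zero, zero_mul, Complex.exp_zero, one_mul,
        Complex.ofReal_one, mul_one, key, neg_neg]
    · simp only [udel, if_neg hA]
      set d' := Complex.exp (-((((u 1 0).arg : ℝ) : ℂ) * Complex.I)) * u 1 1 with hd'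
      have habsd' : ‖d'‖ = ‖u 0 0‖ := by
        rw [hd']
        simp [Complex.norm_exp, N3]
      have key := Complex.norm_mul_exp_arg_mul_I d'
      rw [habsd'] at key
      have hconj : (starRingEnd ℂ) (u 0 0) ≠ 0 := by simpa using hA
      have hEα := Complex.norm_mul_exp_arg_mul_I (u 0 0)
      have hEαc : ((‖u 0 0‖ : ℝ) : ℂ) *
          (starRingEnd ℂ) (Complex.exp (((u 0 0).arg : ℂ) * Complex.I)) = (starRingEnd ℂ) (u 0 0) := by
        rw [← Complex.conj_ofReal (‖u 0 0‖), ← _root_.map_mul, hEα]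
      have h5 := conj_exp_mul_I ((u 0 0).arg)
      have hEγ := Complex.norm_mul_exp_arg_mul_I (u 1 0)
      have hEγc : ((‖u 1 0‖ : ℝ) : ℂ) *
          (starRingEnd ℂ) (Complex.exp (((u 1 0).arg : ℂ) * Complex.I)) = (starRingEnd ℂ) (u 1 0) := by
        rw [← Complex.conj_ofReal (‖u 1 0‖), ← _root_.map_mul, hEγ]
      have hconjEγ : (starRingEnd ℂ) (Complex.exp (((u 1 0).arg : ℂ) * Complex.I)) * u 1 1
          = Complex.exp ((d'.arg : ℂ) * Complex.I) * ((‖u 0 0‖ : ℝ) : ℂ) := by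
        rw [conj_exp_I, ← hd']
        linear_combination -key
      refine mul_left_cancel₀ hconj ?_
      linear_combination (-1 : ℂ) * h01 + (-(u 1 1)) * hEγc
        + (((‖u 1 0‖ : ℝ) : ℂ)) * hconjEγ
        + (Complex.exp (((u 0 0).arg : ℂ) * Complex.I) * Complex.exp ((d'.arg : ℂ) * Complex.I)
            * ((‖u 1 0‖ : ℝ) : ℂ)) * hEαc
        + (-(((‖u 0 0‖ : ℝ) : ℂ)) * Complex.exp ((d'.arg : ℂ) * Complex.I)
            * ((‖u 1 0‖ : ℝ) : ℂ)) * h5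
  · -- (1,0)
    rw [← Complex.ofReal_sin, hsin, mul_comm]
    exact Complex.norm_mul_exp_arg_mul_I (u 1 0)
  · -- (1,1)
    rw [← Complex.ofReal_cos, hcos]
    by_cases hA : u 0 0 = 0
    · have hd0 : u 1 1 = 0 := by
        have : ‖u 1 1‖ = 0 := by rw [N3, hA, norm_zero]
        exact norm_eq_zero.mp this
      rw [hd0, hA, norm_zero, Complex.ofReal_zero, mul_zero]
    · simp only [udel, if_neg hA]
      set d' := Complex.exp (-((((u 1 0).arg : ℝ) : ℂ) * Complex.I)) * u 1 1 with hd'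
      have habsd' : ‖d'‖ = ‖u 0 0‖ := by
        rw [hd']
        simp [Complex.norm_exp, N3]
      have key := Complex.norm_mul_exp_arg_mul_I d'
      rw [habsd'] at key
      calc Complex.exp (((u 1 0).arg : ℂ) * Complex.I) * Complex.exp ((d'.arg : ℂ) * Complex.I) *
            ((‖u 0 0‖ : ℝ) : ℂ)
          = Complex.exp (((u 1 0).arg : ℂ) * Complex.I) *
            (((‖u 0 0‖ : ℝ) : ℂ) * Complex.exp ((d'.arg : ℂ) * Complex.I)) := by ring
        _ = Complex.exp (((u 1 0).arg : ℂ) * Complex.I) * d' := by rw [key]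
        _ = (Complex.exp (((u 1 0).arg : ℂ) * Complex.I) *
              Complex.exp (-((((u 1 0).arg : ℝ) : ℂ) * Complex.I))) * u 1 1 := by rw [hd']; ring
        _ = u 1 1 := by rw [← Complex.exp_add, add_neg_cancel, Complex.exp_zero, one_mul]

theorem stmt19 (n : ℕ) (hn : 1 ≤ n)
    (H : Matrix (Fin n → Fin 2) (Fin n → Fin 2) ℂ) (hH : Hᴴ = H)
    (hnorm : ((H * H).trace).re = 1)
    (K₀ : Matrix (Fin n → Fin 2) (Fin n → Fin 2) ℂ)
    (hK₀ : IsLocalUnitary K₀) (hinv : K₀ * H * K₀ᴴ = -H) :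
    { x : ℝ | ∃ K : Matrix (Fin n → Fin 2) (Fin n → Fin 2) ℂ,
        IsLocalUnitary K ∧ (x : ℂ) = ((-H) * (K * H * Kᴴ)).trace } =
      Set.Icc (-1 : ℝ) 1 := by
  apply Set.Subset.antisymm
  · -- Cauchy–Schwarz: values lie in [-1, 1]
    rintro x ⟨K, hK, hx⟩
    have hKu : Kᴴ * K = 1 := localUnitary_conjTranspose_mul hK
    set B := K * H * Kᴴ with hB
    have hBH : Bᴴ = B := by
      rw [hB, Matrix.conjTranspose_mul, Matrix.conjTranspose_mul,
        Matrix.conjTranspose_conjTranspose, hH, Matrix.mul_assoc]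
    have hre : x = (((-H) * B).trace).re := by rw [← hx, Complex.ofReal_re]
    have e1 : ((Hᴴ * H).trace).re = 1 := by rw [hH]; exact hnorm
    have e2 : ((Bᴴ * B).trace).re = 1 := by
      have hBB : Bᴴ * B = K * (H * H) * Kᴴ := by
        rw [hBH, hB]
        have : K * H * Kᴴ * (K * H * Kᴴ) = K * H * ((Kᴴ * K) * (H * Kᴴ)) := by
          simp only [Matrix.mul_assoc]
        rw [this, hKu, Matrix.one_mul]
        simp only [Matrix.mul_assoc]
      rw [hBB, Matrix.trace_mul_comm, ← Matrix.mul_assoc, hKu, Matrix.one_mul]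
      exact hnorm
    have habs : ‖((-H) * B).trace‖ ≤ 1 := by
      rw [show (-H) * B = -(H * B) from Matrix.neg_mul H B, Matrix.trace_neg, norm_neg,
        show H * B = Hᴴ * B by rw [hH]]
      have hcs := cs_bound H B
      rw [e1, e2, Real.sqrt_one, mul_one] at hcs
      exact hcs
    have : |x| ≤ 1 := by
      rw [hre]
      exact le_trans (Complex.abs_re_le_norm _) habs
    exact Set.mem_Icc.mpr (abs_le.mp this)
  · -- connectedness: all values in [-1, 1] are attained
    intro x hx
    obtain ⟨u, hu1, hu2⟩ := hK₀
    set Kt : ℝ → Matrix (Fin n → Fin 2) (Fin n → Fin 2) ℂ :=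
      fun t => Matrix.of fun f g => ∏ ℓ, upath (u ℓ) t (f ℓ) (g ℓ) with hKtdef
    have hKtloc : ∀ t, IsLocalUnitary (Kt t) :=
      fun t => ⟨fun ℓ => upath (u ℓ) t, fun ℓ => upath_unitary _ _, fun f g => rfl⟩
    set F : ℝ → ℝ := fun t => (((-H) * (Kt t * H * (Kt t)ᴴ)).trace).re with hFdef
    have hcont : Continuous F := by
      have hKc : Continuous Kt := continuous_matrix fun f g => by
        show Continuous fun a => ∏ ℓ, upath (u ℓ) a (f ℓ) (g ℓ)
        apply continuous_finset_prod
        intro ℓ _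
        exact upath_continuous (u ℓ) (f ℓ) (g ℓ)
      exact Complex.continuous_re.comp
        ((continuous_const.matrix_mul
          ((hKc.matrix_mul continuous_const).matrix_mul hKc.matrix_conjTranspose)).matrix_trace)
    have hKt0 : Kt 0 = 1 := by
      ext f g
      show (∏ ℓ, upath (u ℓ) 0 (f ℓ) (g ℓ)) = _
      rw [show (∏ ℓ, upath (u ℓ) 0 (f ℓ) (g ℓ))
          = ∏ ℓ, (1 : Matrix (Fin 2) (Fin 2) ℂ) (f ℓ) (g ℓ) from
        Finset.prod_congr rfl fun ℓ _ => by rw [upath_zero]]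
      exact kron_one f g
    have hKt1 : Kt 1 = K₀ := by
      ext f g
      show (∏ ℓ, upath (u ℓ) 1 (f ℓ) (g ℓ)) = K₀ f g
      rw [hu2 f g]
      exact Finset.prod_congr rfl fun ℓ _ => by rw [upath_one _ (hu1 ℓ)]
    have hF0 : F 0 = -1 := by
      rw [hFdef]
      simp only [hKt0, Matrix.conjTranspose_one, Matrix.one_mul, Matrix.mul_one]
      rw [show (-H) * H = -(H * H) from Matrix.neg_mul H H, Matrix.trace_neg, Complex.neg_re,
        hnorm]
    have hF1 : F 1 = 1 := by
      rw [hFdef]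
      simp only [hKt1, hinv]
      rw [show (-H) * (-H) = H * H by rw [Matrix.neg_mul, Matrix.mul_neg, neg_neg],
        hnorm]
    have hIVT := intermediate_value_Icc (by norm_num : (0:ℝ) ≤ 1) hcont.continuousOn
    rw [hF0, hF1] at hIVT
    obtain ⟨t, _, hFt⟩ := hIVT hx
    refine ⟨Kt t, hKtloc t, ?_⟩
    have hBH : (Kt t * H * (Kt t)ᴴ)ᴴ = Kt t * H * (Kt t)ᴴ := by
      rw [Matrix.conjTranspose_mul, Matrix.conjTranspose_mul,
        Matrix.conjTranspose_conjTranspose, hH, Matrix.mul_assoc]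
    have him : (((-H) * (Kt t * H * (Kt t)ᴴ)).trace).im = 0 :=
      trace_herm_im (by rw [Matrix.conjTranspose_neg, hH]) hBH
    apply Complex.ext
    · rw [Complex.ofReal_re, ← hFt]
    · rw [Complex.ofReal_im, him]
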